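/- (Inversion formula for admissible cumulants.) Let M : S → ℂ with M(1) = 1 and let L be its admissible cumulants. Then for every s ∈ S⁺, L(s) = Σ_{u∈AP(s)} m(u|1_s) M(u), where M(u) = M(u_1)⋯M(u_p) for u = (u_1,…,u_p), 1_s is the one-block partition of s, and m is the Möbius function of the lattice AP(s). -/

import Mathlib

/-- The two-letter alphabet `{z, w}`. -/
inductive Letter | z | w
deriving DecidableEq

/-- Words: elements of the free monoid `S = FS({z,w})`. -/
abbrev Word := List Letter

/-- The letter of `s` at position `j` (defaulting to `z`). -/
def letterAt (s : Word) (j : ℕ) : Letter := s.getD j Letter.z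

/-- `P` is a partition of the finite set of positions `g ⊆ ℕ` into nonempty blocks. -/
def IsPartitionOn (g : Finset ℕ) (P : Finset (Finset ℕ)) : Prop :=
  (∀ b ∈ P, b.Nonempty) ∧ (P : Set (Finset ℕ)).PairwiseDisjoint id ∧ P.sup id = g

/-- The position `j` is inner with respect to the block `b`:
`j ∉ b` and `min b < j < max b`. -/
def InnerPos (j : ℕ) (b : Finset ℕ) : Prop :=
  j ∉ b ∧ ∃ i ∈ b, ∃ k ∈ b, i < j ∧ j < k

/-- A partition is admissible if no block contains a letter `w` that is inner
with respect to another block. -/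
def Admissible (s : Word) (P : Finset (Finset ℕ)) : Prop :=
  ∀ b ∈ P, ∀ b' ∈ P, b ≠ b' → ∀ j ∈ b, letterAt s j = Letter.w → ¬ InnerPos j b'

open scoped Classical in
/-- The set `AP(s)` of admissible partitions of the positions `g` of the word `s`. -/
noncomputable def APfin (s : Word) (g : Finset ℕ) : Finset (Finset (Finset ℕ)) :=
  g.powerset.powerset.filter fun P => IsPartitionOn g P ∧ Admissible s P

/-- The subword of `s` determined by a set of positions `b`. -/
def wordOf (s : Word) (b : Finset ℕ) : Word :=
  (b.sort (· ≤ ·)).map (letterAt s)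

/-- `L` is the family of admissible cumulants of the moment function `M`:
`M(s) = Σ_{u ∈ AP(s)} L(u₁)⋯L(u_p)` for every nonempty word `s`. -/
def IsCumulants (M L : Word → ℂ) : Prop :=
  ∀ s : Word, s ≠ [] →
    M s = ∑ P ∈ APfin s (Finset.range s.length), ∏ b ∈ P, L (wordOf s b)

/-- `P` refines `Q`: every block of `P` is contained in a block of `Q`. -/
def Refines (P Q : Finset (Finset ℕ)) : Prop := ∀ b ∈ P, ∃ c ∈ Q, b ⊆ c

open scoped Classical in
/-- `m` is the Möbius function of the lattice `AP(s)` of admissible partitions of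
the position set `g` of `s`: `m(u|u) = 1` and `m(u|v) = −Σ_{u ≤ t < v} m(u|t)`. -/
noncomputable def IsMobius (s : Word) (g : Finset ℕ)
    (m : Finset (Finset ℕ) → Finset (Finset ℕ) → ℂ) : Prop :=
  (∀ u ∈ APfin s g, m u u = 1) ∧
    ∀ u ∈ APfin s g, ∀ v ∈ APfin s g, Refines u v → u ≠ v →
      m u v = -∑ t ∈ (APfin s g).filter fun t => Refines u t ∧ Refines t v ∧ t ≠ v, m u t

open scoped Classical
open Finset

/- ## basic lemmas -/

lemma mem_APfin {s : Word} {g : Finset ℕ} {P : Finset (Finset ℕ)} :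
    P ∈ APfin s g ↔ IsPartitionOn g P ∧ Admissible s P := by
  unfold APfin
  rw [mem_filter, and_iff_right_iff_imp]
  rintro ⟨h1, -⟩
  rw [mem_powerset]
  intro b hb
  rw [mem_powerset]
  have := Finset.le_sup (f := id) hb
  rwa [h1.2.2] at this

lemma block_subset {g : Finset ℕ} {P : Finset (Finset ℕ)} (h : IsPartitionOn g P)
    {b : Finset ℕ} (hb : b ∈ P) : b ⊆ g := by
  have := Finset.le_sup (f := id) hb
  rwa [h.2.2] at this

lemma refines_refl (P : Finset (Finset ℕ)) : Refines P P := fun b hb => ⟨b, hb, subset_rfl⟩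

lemma refines_trans {P Q R : Finset (Finset ℕ)} (h1 : Refines P Q) (h2 : Refines Q R) :
    Refines P R := by
  intro b hb
  obtain ⟨c, hc, hbc⟩ := h1 b hb
  obtain ⟨d, hd, hcd⟩ := h2 c hc
  exact ⟨d, hd, hbc.trans hcd⟩

lemma refines_subset {P Q : Finset (Finset ℕ)}
    (hP : ∀ b ∈ P, (b : Finset ℕ).Nonempty)
    (hPd : (P : Set (Finset ℕ)).PairwiseDisjoint id)
    (h1 : Refines P Q) (h2 : Refines Q P) : P ⊆ Q := by
  intro b hb
  obtain ⟨c, hc, hbc⟩ := h1 b hb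
  obtain ⟨b', hb', hcb'⟩ := h2 c hc
  have hbb' : b = b' := by
    by_contra hne
    have hd := hPd hb hb' hne
    have : b ⊆ b' := hbc.trans hcb'
    obtain ⟨x, hx⟩ := hP b hb
    exact (Finset.disjoint_left.1 hd) hx (this hx)
  have : b = c := subset_antisymm hbc (hbb' ▸ hcb')
  rwa [this]

lemma refines_antisymm {P Q : Finset (Finset ℕ)}
    (hP : ∀ b ∈ P, (b : Finset ℕ).Nonempty) (hQ : ∀ b ∈ Q, (b : Finset ℕ).Nonempty)
    (hPd : (P : Set (Finset ℕ)).PairwiseDisjoint id)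
    (hQd : (Q : Set (Finset ℕ)).PairwiseDisjoint id)
    (h1 : Refines P Q) (h2 : Refines Q P) : P = Q :=
  subset_antisymm (refines_subset hP hPd h1 h2) (refines_subset hQ hQd h2 h1)

lemma APfin_antisymm {s : Word} {g : Finset ℕ} {P Q : Finset (Finset ℕ)}
    (hP : P ∈ APfin s g) (hQ : Q ∈ APfin s g)
    (h1 : Refines P Q) (h2 : Refines Q P) : P = Q := by
  obtain ⟨hP1, -⟩ := mem_APfin.1 hP
  obtain ⟨hQ1, -⟩ := mem_APfin.1 hQ
  exact refines_antisymm hP1.1 hQ1.1 hP1.2.1 hQ1.2.1 h1 h2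

lemma top_mem_APfin {s : Word} {g : Finset ℕ} (hg : g.Nonempty) : {g} ∈ APfin s g := by
  rw [mem_APfin]
  refine ⟨⟨?_, ?_, ?_⟩, ?_⟩
  · intro b hb
    rw [Finset.mem_singleton] at hb
    rwa [hb]
  · rw [Finset.coe_singleton]
    exact Set.pairwiseDisjoint_singleton g id
  · exact Finset.sup_singleton
  · intro b hb b' hb' hne
    rw [Finset.mem_singleton] at hb hb'
    exact absurd (hb.trans hb'.symm) hne

lemma refines_top {s : Word} {g : Finset ℕ} {P : Finset (Finset ℕ)} (hP : P ∈ APfin s g) :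
    Refines P {g} := fun b hb =>
  ⟨g, Finset.mem_singleton_self g, block_subset (mem_APfin.1 hP).1 hb⟩

/- ## Möbius δ lemma -/

lemma mobius_row {s : Word} {g : Finset ℕ} {m : Finset (Finset ℕ) → Finset (Finset ℕ) → ℂ}
    (hm : IsMobius s g m) {u v : Finset (Finset ℕ)} (hu : u ∈ APfin s g) (hv : v ∈ APfin s g)
    (huv : Refines u v) :
    ∑ t ∈ (APfin s g).filter (fun t => Refines u t ∧ Refines t v), m u t
      = if u = v then 1 else 0 := by
  rcases eq_or_ne u v with rfl | hne
  · rw [if_pos rfl]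
    have hset : (APfin s g).filter (fun t => Refines u t ∧ Refines t u) = {u} := by
      ext t
      simp only [mem_filter, Finset.mem_singleton]
      constructor
      · rintro ⟨ht, h1, h2⟩
        exact APfin_antisymm ht hu h2 h1
      · rintro rfl
        exact ⟨hu, refines_refl t, refines_refl t⟩
    rw [hset, Finset.sum_singleton, hm.1 u hu]
  · rw [if_neg hne]
    have hvmem : v ∈ (APfin s g).filter (fun t => Refines u t ∧ Refines t v) :=
      mem_filter.2 ⟨hv, huv, refines_refl v⟩
    rw [← Finset.add_sum_erase _ _ hvmem]
    have herase : ((APfin s g).filter (fun t => Refines u t ∧ Refines t v)).erase v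
        = (APfin s g).filter (fun t => Refines u t ∧ Refines t v ∧ t ≠ v) := by
      ext t
      simp only [Finset.mem_erase, mem_filter]
      tauto
    rw [herase, hm.2 u hu v hv huv hne]
    ring

lemma mobius_delta {s : Word} {g : Finset ℕ} {m : Finset (Finset ℕ) → Finset (Finset ℕ) → ℂ}
    (hm : IsMobius s g m) {v t : Finset (Finset ℕ)} (hv : v ∈ APfin s g) (ht : t ∈ APfin s g)
    (hvt : Refines v t) :
    ∑ u ∈ (APfin s g).filter (fun u => Refines v u ∧ Refines u t), m u t
      = if v = t then 1 else 0 := by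
  set A := APfin s g with hA
  suffices H : ∀ n : ℕ, ∀ v t : Finset (Finset ℕ), v ∈ A → t ∈ A → Refines v t →
      (A.filter (fun x => Refines v x ∧ Refines x t)).card ≤ n →
      ∑ u ∈ A.filter (fun u => Refines v u ∧ Refines u t), m u t = if v = t then 1 else 0 by
    exact H _ v t hv ht hvt le_rfl
  intro n
  induction n with
  | zero =>
    intro v t hv ht hvt hcard
    exfalso
    have htmem : t ∈ A.filter (fun x => Refines v x ∧ Refines x t) :=
      mem_filter.2 ⟨ht, hvt, refines_refl t⟩
    have := Finset.card_pos.2 ⟨t, htmem⟩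
    omega
  | succ n ih =>
    intro v t hv ht hvt hcard
    -- the double counting identity
    have key : ∑ r ∈ A.filter (fun r => Refines v r ∧ Refines r t),
        (∑ u ∈ A.filter (fun u => Refines v u ∧ Refines u r), m u r) = 1 := by
      have swap : ∑ u ∈ A.filter (fun u => Refines v u ∧ Refines u t),
            (∑ r ∈ A.filter (fun r => Refines u r ∧ Refines r t), m u r)
          = ∑ r ∈ A.filter (fun r => Refines v r ∧ Refines r t),
            (∑ u ∈ A.filter (fun u => Refines v u ∧ Refines u r), m u r) := by
        have e1 : ∑ u ∈ A.filter (fun u => Refines v u ∧ Refines u t),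
              (∑ r ∈ A.filter (fun r => Refines u r ∧ Refines r t), m u r)
            = ∑ u ∈ A, ∑ r ∈ A,
                (if Refines v u ∧ Refines u r ∧ Refines r t then m u r else 0) := by
          rw [Finset.sum_filter]
          refine Finset.sum_congr rfl fun u hu => ?_
          by_cases h : Refines v u ∧ Refines u t
          · rw [if_pos h, Finset.sum_filter]
            refine Finset.sum_congr rfl fun r hr => ?_
            by_cases h2 : Refines u r ∧ Refines r t
            · rw [if_pos h2, if_pos ⟨h.1, h2.1, h2.2⟩]
            · rw [if_neg h2, if_neg (fun hh => h2 ⟨hh.2.1, hh.2.2⟩)]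
          · rw [if_neg h]
            refine (Finset.sum_eq_zero fun r hr => ?_).symm
            rw [if_neg]
            rintro ⟨h1, h2, h3⟩
            exact h ⟨h1, refines_trans h2 h3⟩
        have e2 : ∑ r ∈ A.filter (fun r => Refines v r ∧ Refines r t),
              (∑ u ∈ A.filter (fun u => Refines v u ∧ Refines u r), m u r)
            = ∑ r ∈ A, ∑ u ∈ A,
                (if Refines v u ∧ Refines u r ∧ Refines r t then m u r else 0) := by
          rw [Finset.sum_filter]
          refine Finset.sum_congr rfl fun r hr => ?_
          by_cases h : Refines v r ∧ Refines r t
          · rw [if_pos h, Finset.sum_filter]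
            refine Finset.sum_congr rfl fun u hu => ?_
            by_cases h2 : Refines v u ∧ Refines u r
            · rw [if_pos h2, if_pos ⟨h2.1, h2.2, h.2⟩]
            · rw [if_neg h2, if_neg (fun hh => h2 ⟨hh.1, hh.2.1⟩)]
          · rw [if_neg h]
            refine (Finset.sum_eq_zero fun u hu => ?_).symm
            rw [if_neg]
            rintro ⟨h1, h2, h3⟩
            exact h ⟨refines_trans h1 h2, h3⟩
        rw [e1, e2, Finset.sum_comm]
      rw [← swap]
      have : ∀ u ∈ A.filter (fun u => Refines v u ∧ Refines u t),
          (∑ r ∈ A.filter (fun r => Refines u r ∧ Refines r t), m u r)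
            = if u = t then 1 else 0 := by
        intro u hu
        obtain ⟨huA, -, hut⟩ := mem_filter.1 hu
        exact mobius_row hm huA ht hut
      rw [Finset.sum_congr rfl this, Finset.sum_ite_eq' _ t (fun _ => (1 : ℂ))]
      rw [if_pos (mem_filter.2 ⟨ht, hvt, refines_refl t⟩)]
    rcases eq_or_ne v t with rfl | hne
    · rw [if_pos rfl]
      have hset : A.filter (fun u => Refines v u ∧ Refines u v) = {v} := by
        ext x
        simp only [mem_filter, Finset.mem_singleton]
        constructor
        · rintro ⟨hx, h1, h2⟩
          exact APfin_antisymm hx hv h2 h1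
        · rintro rfl
          exact ⟨hv, refines_refl x, refines_refl x⟩
      rw [hset, Finset.sum_singleton, hm.1 v hv]
    · rw [if_neg hne]
      have htmem : t ∈ A.filter (fun r => Refines v r ∧ Refines r t) :=
        mem_filter.2 ⟨ht, hvt, refines_refl t⟩
      rw [← Finset.add_sum_erase _ _ htmem] at key
      have hrest : ∀ r ∈ (A.filter (fun r => Refines v r ∧ Refines r t)).erase t,
          (∑ u ∈ A.filter (fun u => Refines v u ∧ Refines u r), m u r)
            = if v = r then 1 else 0 := by
        intro r hr
        have h1 := Finset.mem_erase.1 hr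
        have hrt : r ≠ t := h1.1
        have hrA : r ∈ A := (mem_filter.1 h1.2).1
        have hvr : Refines v r := (mem_filter.1 h1.2).2.1
        have hrt' : Refines r t := (mem_filter.1 h1.2).2.2
        refine ih v r hv hrA hvr ?_
        have hsub : A.filter (fun x => Refines v x ∧ Refines x r)
            ⊆ A.filter (fun x => Refines v x ∧ Refines x t) := by
          intro x hx
          obtain ⟨hxA, h1, h2⟩ := mem_filter.1 hx
          exact mem_filter.2 ⟨hxA, h1, refines_trans h2 hrt'⟩
        have hss : A.filter (fun x => Refines v x ∧ Refines x r)
            ⊂ A.filter (fun x => Refines v x ∧ Refines x t) := by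
          refine ⟨hsub, fun hsub2 => ?_⟩
          have : t ∈ A.filter (fun x => Refines v x ∧ Refines x r) :=
            hsub2 (mem_filter.2 ⟨ht, hvt, refines_refl t⟩)
          obtain ⟨-, -, h2⟩ := mem_filter.1 this
          exact hrt (APfin_antisymm hrA ht hrt' h2)
        have := Finset.card_lt_card hss
        omega
      rw [Finset.sum_congr rfl hrest, Finset.sum_ite_eq _ v (fun _ => (1 : ℂ))] at key
      have hvmem : v ∈ (A.filter (fun r => Refines v r ∧ Refines r t)).erase t :=
        Finset.mem_erase.2 ⟨hne, mem_filter.2 ⟨hv, refines_refl v, hvt⟩⟩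
      rw [if_pos hvmem] at key
      linear_combination key

/- ## transport along the sorted enumeration of a block -/

noncomputable def enum (b : Finset ℕ) : ℕ → ℕ := fun i => (b.sort (· ≤ ·)).getD i 0

lemma enum_mem {b : Finset ℕ} {i : ℕ} (hi : i < b.card) : enum b i ∈ b := by
  have hlen : (b.sort (· ≤ ·)).length = b.card := Finset.length_sort _
  rw [enum, List.getD_eq_getElem _ _ (by omega)]
  exact (Finset.mem_sort _).1 (List.getElem_mem _)

lemma enum_strictMonoOn {b : Finset ℕ} {i j : ℕ} (hij : i < j) (hj : j < b.card) :
    enum b i < enum b j := by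
  have hlen : (b.sort (· ≤ ·)).length = b.card := Finset.length_sort _
  have hi' : i < (b.sort (· ≤ ·)).length := by omega
  have hj' : j < (b.sort (· ≤ ·)).length := by omega
  rw [enum, enum, List.getD_eq_getElem _ _ hi', List.getD_eq_getElem _ _ hj']
  have := (Finset.sortedLT_sort b).pairwise.rel_get_of_lt (a := ⟨i, hi'⟩) (b := ⟨j, hj'⟩)
    (by simpa using hij)
  simpa using this

lemma enum_lt_iff {b : Finset ℕ} {i j : ℕ} (hi : i < b.card) (hj : j < b.card) :
    enum b i < enum b j ↔ i < j := by
  constructor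
  · intro h
    by_contra hij
    rcases eq_or_lt_of_le (not_lt.1 hij) with rfl | h1
    · exact lt_irrefl _ h
    · exact absurd (enum_strictMonoOn h1 hi) (by omega)
  · intro h
    exact enum_strictMonoOn h hj

lemma enum_injOn {b : Finset ℕ} {i j : ℕ} (hi : i < b.card) (hj : j < b.card)
    (h : enum b i = enum b j) : i = j := by
  rcases lt_trichotomy i j with h1 | h1 | h1
  · exact absurd (enum_strictMonoOn h1 hj) (by omega)
  · exact h1
  · exact absurd (enum_strictMonoOn h1 hi) (by omega)

lemma enum_image_range (b : Finset ℕ) : (Finset.range b.card).image (enum b) = b := by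
  ext x
  simp only [Finset.mem_image, Finset.mem_range]
  constructor
  · rintro ⟨i, hi, rfl⟩
    exact enum_mem hi
  · intro hx
    have hlen : (b.sort (· ≤ ·)).length = b.card := Finset.length_sort _
    have hx' : x ∈ b.sort (· ≤ ·) := (Finset.mem_sort _).2 hx
    obtain ⟨i, hi, hix⟩ := List.mem_iff_getElem.1 hx'
    exact ⟨i, by omega, by rw [enum, List.getD_eq_getElem _ _ hi, hix]⟩

lemma letterAt_wordOf {s : Word} {b : Finset ℕ} {i : ℕ} (hi : i < b.card) :
    letterAt (wordOf s b) i = letterAt s (enum b i) := by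
  have hlen : (b.sort (· ≤ ·)).length = b.card := Finset.length_sort _
  have hi' : i < (b.sort (· ≤ ·)).length := by omega
  rw [letterAt, wordOf, List.getD_eq_getElem _ _ (by simpa using hi'), List.getElem_map]
  rw [enum, List.getD_eq_getElem _ _ hi', letterAt]

lemma length_wordOf (s : Word) (b : Finset ℕ) : (wordOf s b).length = b.card := by
  rw [wordOf, List.length_map, Finset.length_sort]

lemma sort_image_enum {b : Finset ℕ} {c : Finset ℕ} (hc : c ⊆ Finset.range b.card) :
    (c.image (enum b)).sort (· ≤ ·) = (c.sort (· ≤ ·)).map (enum b) := by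
  have hinj : ∀ x ∈ c.val, ∀ y ∈ c.val, enum b x = enum b y → x = y := by
    intro x hx y hy h
    exact enum_injOn (Finset.mem_range.1 (hc hx)) (Finset.mem_range.1 (hc hy)) h
  apply List.Perm.eq_of_pairwise' (r := (· ≤ ·))
  rotate_right
  · rw [← Multiset.coe_eq_coe, Finset.sort_eq]
    have hval : (c.image (enum b)).val = c.val.map (enum b) := by
      rw [Finset.image_val, Multiset.dedup_eq_self.2 (Multiset.Nodup.map_on hinj c.nodup)]
    rw [hval, ← Finset.sort_eq c (· ≤ ·), Multiset.map_coe]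
  · exact Finset.pairwise_sort _ _
  · rw [List.pairwise_map]
    refine (Finset.sortedLT_sort c).pairwise.imp_of_mem ?_
    intro x y hx hy hxy
    have hx' := Finset.mem_range.1 (hc ((Finset.mem_sort _).1 hx))
    have hy' := Finset.mem_range.1 (hc ((Finset.mem_sort _).1 hy))
    exact le_of_lt ((enum_lt_iff hx' hy').2 hxy)

lemma wordOf_image_enum {s : Word} {b c : Finset ℕ} (hc : c ⊆ Finset.range b.card) :
    wordOf s (c.image (enum b)) = wordOf (wordOf s b) c := by
  rw [wordOf, sort_image_enum hc, List.map_map, wordOf]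
  apply List.map_congr_left
  intro x hx
  have hx' := Finset.mem_range.1 (hc ((Finset.mem_sort _).1 hx))
  simp only [Function.comp_apply]
  exact (letterAt_wordOf hx').symm

lemma innerPos_map {φ : ℕ → ℕ} {dom : Finset ℕ}
    (hmono : ∀ i ∈ dom, ∀ j ∈ dom, (φ i < φ j ↔ i < j))
    {c : Finset ℕ} (hc : c ⊆ dom) {j : ℕ} (hj : j ∈ dom) :
    InnerPos (φ j) (c.image φ) ↔ InnerPos j c := by
  have hinj : ∀ x ∈ dom, ∀ y ∈ dom, φ x = φ y → x = y := by
    intro x hx y hy h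
    rcases lt_trichotomy x y with h1 | h1 | h1
    · exact absurd ((hmono x hx y hy).2 h1) (by omega)
    · exact h1
    · exact absurd ((hmono y hy x hx).2 h1) (by omega)
  constructor
  · rintro ⟨hnm, x, hx, y, hy, h1, h2⟩
    obtain ⟨i, hi, rfl⟩ := Finset.mem_image.1 hx
    obtain ⟨k, hk, rfl⟩ := Finset.mem_image.1 hy
    refine ⟨fun hjc => hnm (Finset.mem_image_of_mem φ hjc), i, hi, k, hk, ?_, ?_⟩
    · exact (hmono i (hc hi) j hj).1 h1
    · exact (hmono j hj k (hc hk)).1 h2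
  · rintro ⟨hnm, i, hi, k, hk, h1, h2⟩
    refine ⟨?_, φ i, Finset.mem_image_of_mem φ hi, φ k, Finset.mem_image_of_mem φ hk, ?_, ?_⟩
    · intro hmem
      obtain ⟨x, hx, hxe⟩ := Finset.mem_image.1 hmem
      exact hnm (hinj x (hc hx) j hj hxe ▸ hx)
    · exact (hmono i (hc hi) j hj).2 h1
    · exact (hmono j hj k (hc hk)).2 h2

lemma sup_image_blocks (φ : ℕ → ℕ) (P : Finset (Finset ℕ)) :
    P.sup (fun c => c.image φ) = (P.sup id).image φ := by
  induction P using Finset.induction_on with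
  | empty => simp
  | @insert a s ha ih =>
    rw [Finset.sup_insert, Finset.sup_insert, ih, id_eq]
    simp [Finset.sup_eq_union, Finset.image_union]

lemma map_APfin {t t' : Word} {dom ran : Finset ℕ} {φ : ℕ → ℕ}
    (hmono : ∀ i ∈ dom, ∀ j ∈ dom, (φ i < φ j ↔ i < j))
    (himg : dom.image φ = ran)
    (hlet : ∀ j ∈ dom, letterAt t j = letterAt t' (φ j))
    {P : Finset (Finset ℕ)} (hP : P ∈ APfin t dom) :
    P.image (fun c => c.image φ) ∈ APfin t' ran := by
  have hinj : ∀ x ∈ dom, ∀ y ∈ dom, φ x = φ y → x = y := by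
    intro x hx y hy h
    rcases lt_trichotomy x y with h1 | h1 | h1
    · exact absurd ((hmono x hx y hy).2 h1) (by omega)
    · exact h1
    · exact absurd ((hmono y hy x hx).2 h1) (by omega)
  obtain ⟨⟨hne, hdisj, hsup⟩, hadm⟩ := mem_APfin.1 hP
  have hsub : ∀ c ∈ P, c ⊆ dom := fun c hc => by
    have := Finset.le_sup (f := id) hc
    rwa [hsup] at this
  rw [mem_APfin]
  refine ⟨⟨?_, ?_, ?_⟩, ?_⟩
  · intro d hd
    obtain ⟨c, hc, rfl⟩ := Finset.mem_image.1 hd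
    exact (hne c hc).image φ
  · intro d1 hd1 d2 hd2 hne12
    rw [Finset.mem_coe] at hd1 hd2
    obtain ⟨c1, hc1, rfl⟩ := Finset.mem_image.1 hd1
    obtain ⟨c2, hc2, rfl⟩ := Finset.mem_image.1 hd2
    have hcne : c1 ≠ c2 := fun h => hne12 (by rw [h])
    have hdc := hdisj hc1 hc2 hcne
    simp only [Function.onFun, id_eq] at hdc ⊢
    rw [Finset.disjoint_left] at hdc ⊢
    rintro x hx1 hx2
    obtain ⟨a1, ha1, rfl⟩ := Finset.mem_image.1 hx1
    obtain ⟨a2, ha2, ha2e⟩ := Finset.mem_image.1 hx2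
    have he : a2 = a1 := hinj a2 (hsub c2 hc2 ha2) a1 (hsub c1 hc1 ha1) ha2e
    exact hdc ha1 (he ▸ ha2)
  · rw [Finset.sup_image]
    have : ((id : Finset ℕ → Finset ℕ) ∘ fun c : Finset ℕ => c.image φ) = fun c : Finset ℕ => c.image φ := rfl
    rw [this, sup_image_blocks, hsup, himg]
  · intro d hd d' hd' hdd' j' hj'mem hw
    obtain ⟨c, hc, rfl⟩ := Finset.mem_image.1 hd
    obtain ⟨c', hc', rfl⟩ := Finset.mem_image.1 hd'
    obtain ⟨j, hj, rfl⟩ := Finset.mem_image.1 hj'mem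
    have hcc' : c ≠ c' := fun h => hdd' (by rw [h])
    have hjdom : j ∈ dom := hsub c hc hj
    have hwj : letterAt t j = Letter.w := by rw [hlet j hjdom]; exact hw
    rw [innerPos_map hmono (hsub c' hc') hjdom]
    exact hadm c hc c' hc' hcc' j hj hwj

lemma transport {s : Word} (L : Word → ℂ) {b : Finset ℕ} :
    (∑ P ∈ APfin (wordOf s b) (Finset.range b.card), ∏ c ∈ P, L (wordOf (wordOf s b) c))
      = ∑ Q ∈ APfin s b, ∏ c ∈ Q, L (wordOf s c) := by
  classical
  set t := wordOf s b with ht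
  set k := b.card with hk
  set ψ : ℕ → ℕ := fun x => List.idxOf x (b.sort (· ≤ ·)) with hψ
  have hlen : (b.sort (· ≤ ·)).length = k := Finset.length_sort _
  have hψlt : ∀ x ∈ b, ψ x < k := by
    intro x hx
    rw [hψ, ← hlen]
    exact List.idxOf_lt_length_iff.2 ((Finset.mem_sort _).2 hx)
  have henumψ : ∀ x ∈ b, enum b (ψ x) = x := by
    intro x hx
    have h1 : List.idxOf x (b.sort (· ≤ ·)) < (b.sort (· ≤ ·)).length :=
      List.idxOf_lt_length_iff.2 ((Finset.mem_sort _).2 hx)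
    rw [enum, hψ, List.getD_eq_getElem _ _ h1, List.getElem_idxOf h1]
  have hψenum : ∀ i < k, ψ (enum b i) = i := by
    intro i hi
    have hi' : i < (b.sort (· ≤ ·)).length := by omega
    rw [enum, hψ, List.getD_eq_getElem _ _ hi']
    exact (Finset.sort_nodup _ _).idxOf_getElem i hi'
  have hmono1 : ∀ i ∈ Finset.range k, ∀ j ∈ Finset.range k, (enum b i < enum b j ↔ i < j) :=
    fun i hi j hj => enum_lt_iff (Finset.mem_range.1 hi) (Finset.mem_range.1 hj)
  have himg1 : (Finset.range k).image (enum b) = b := enum_image_range b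
  have hlet1 : ∀ j ∈ Finset.range k, letterAt t j = letterAt s (enum b j) :=
    fun j hj => letterAt_wordOf (Finset.mem_range.1 hj)
  have hmono2 : ∀ i ∈ b, ∀ j ∈ b, (ψ i < ψ j ↔ i < j) := by
    intro i hi j hj
    rw [← enum_lt_iff (hψlt i hi) (hψlt j hj), henumψ i hi, henumψ j hj]
  have himg2 : b.image ψ = Finset.range k := by
    ext x
    simp only [Finset.mem_image, Finset.mem_range]
    constructor
    · rintro ⟨y, hy, rfl⟩
      exact hψlt y hy
    · intro hx
      exact ⟨enum b x, enum_mem hx, hψenum x hx⟩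
  have hlet2 : ∀ j ∈ b, letterAt s j = letterAt t (ψ j) := by
    intro j hj
    rw [letterAt_wordOf (hψlt j hj), henumψ j hj]
  have hback : ∀ c : Finset ℕ, c ⊆ Finset.range k → (c.image (enum b)).image ψ = c := by
    intro c hc
    rw [Finset.image_image]
    have : c.image (ψ ∘ enum b) = c.image id := by
      apply Finset.image_congr
      intro x hx
      exact hψenum x (Finset.mem_range.1 (hc hx))
    rw [this, Finset.image_id]
  have hforth : ∀ d : Finset ℕ, d ⊆ b → (d.image ψ).image (enum b) = d := by
    intro d hd
    rw [Finset.image_image]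
    have : d.image (enum b ∘ ψ) = d.image id := by
      apply Finset.image_congr
      intro x hx
      exact henumψ x (hd hx)
    rw [this, Finset.image_id]
  refine Finset.sum_nbij' (fun P => P.image (fun c => c.image (enum b)))
    (fun Q => Q.image (fun d => d.image ψ)) ?_ ?_ ?_ ?_ ?_
  · intro P hP
    exact map_APfin hmono1 himg1 hlet1 hP
  · intro Q hQ
    exact map_APfin hmono2 himg2 hlet2 hQ
  · intro P hP
    have hsub : ∀ c ∈ P, c ⊆ Finset.range k := fun c hc =>
      block_subset (mem_APfin.1 hP).1 hc
    rw [Finset.image_image]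
    have : P.image ((fun d : Finset ℕ => d.image ψ) ∘ fun c : Finset ℕ => c.image (enum b))
        = P.image id := by
      apply Finset.image_congr
      intro c hc
      exact hback c (hsub c hc)
    rw [this, Finset.image_id]
  · intro Q hQ
    have hsub : ∀ d ∈ Q, d ⊆ b := fun d hd => block_subset (mem_APfin.1 hQ).1 hd
    rw [Finset.image_image]
    have : Q.image ((fun c : Finset ℕ => c.image (enum b)) ∘ fun d : Finset ℕ => d.image ψ)
        = Q.image id := by
      apply Finset.image_congr
      intro d hd
      exact hforth d (hsub d hd)
    rw [this, Finset.image_id]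
  · intro P hP
    have hsub : ∀ c ∈ P, c ⊆ Finset.range k := fun c hc =>
      block_subset (mem_APfin.1 hP).1 hc
    rw [Finset.prod_image]
    · refine Finset.prod_congr rfl fun c hc => ?_
      rw [ht, wordOf_image_enum (hsub c hc)]
    · intro c1 h1 c2 h2 he
      have : (c1.image (enum b)).image ψ = (c2.image (enum b)).image ψ := by
        rw [show c1.image (enum b) = c2.image (enum b) from he]
      rwa [hback c1 (hsub c1 h1), hback c2 (hsub c2 h2)] at this

/- ## gluing -/

lemma admissible_subset {s : Word} {P Q : Finset (Finset ℕ)} (h : Admissible s Q)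
    (hPQ : P ⊆ Q) : Admissible s P :=
  fun b hb b' hb' hne j hj hw => h b (hPQ hb) b' (hPQ hb') hne j hj hw

lemma APfin_empty {s : Word} : APfin s ∅ = {∅} := by
  ext P
  rw [mem_APfin, Finset.mem_singleton]
  constructor
  · rintro ⟨⟨hne, -, hsup⟩, -⟩
    rw [Finset.eq_empty_iff_forall_notMem]
    intro b hb
    obtain ⟨x, hx⟩ := hne b hb
    have hsb : b ⊆ ∅ := by
      have := Finset.le_sup (f := id) hb
      rwa [hsup] at this
    exact absurd (hsb hx) (Finset.notMem_empty x)
  · rintro rfl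
    exact ⟨⟨fun b hb => absurd hb (Finset.notMem_empty b), by simp, by simp⟩,
      fun b hb => absurd hb (Finset.notMem_empty b)⟩

lemma glue {s : Word} (L : Word → ℂ) :
    ∀ (u : Finset (Finset ℕ)) (g : Finset ℕ), IsPartitionOn g u → Admissible s u →
    (∏ b ∈ u, ∑ Q ∈ APfin s b, ∏ c ∈ Q, L (wordOf s c))
      = ∑ v ∈ (APfin s g).filter (fun v => Refines v u), ∏ c ∈ v, L (wordOf s c) := by
  intro u
  induction u using Finset.induction_on with
  | empty =>
    intro g hg ha
    have hge : g = ∅ := by rw [← hg.2.2]; simp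
    subst hge
    rw [APfin_empty]
    have hfil : ({∅} : Finset (Finset (Finset ℕ))).filter (fun v => Refines v ∅) = {∅} := by
      apply Finset.filter_true_of_mem
      intro v hv
      rw [Finset.mem_singleton] at hv
      subst hv
      intro c hc
      exact absurd hc (Finset.notMem_empty c)
    rw [hfil, Finset.sum_singleton, Finset.prod_empty, Finset.prod_empty]
  | @insert b u₀ hbu ih =>
    intro g hg ha
    have hbne : b.Nonempty := hg.1 b (Finset.mem_insert_self b u₀)
    set g₀ := u₀.sup id with hg₀def
    have hg₀ : IsPartitionOn g₀ u₀ :=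
      ⟨fun c hc => hg.1 c (Finset.mem_insert_of_mem hc),
       hg.2.1.subset (Finset.coe_subset.2 (Finset.subset_insert b u₀)), rfl⟩
    have hgsplit : g = b ∪ g₀ := by
      rw [← hg.2.2, Finset.sup_insert]
      rfl
    have hbd : ∀ c ∈ u₀, Disjoint b c := by
      intro c hc
      have hne : b ≠ c := fun h => hbu (h ▸ hc)
      have hdisj := hg.2.1 (Finset.mem_coe.2 (Finset.mem_insert_self b u₀))
        (Finset.mem_coe.2 (Finset.mem_insert_of_mem hc)) hne
      simpa [Function.onFun] using hdisj
    have hbg₀ : Disjoint b g₀ := by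
      rw [hg₀def, Finset.disjoint_sup_right]
      exact hbd
    have hsub₀ : ∀ c ∈ u₀, c ⊆ g₀ := fun c hc => by
      have := Finset.le_sup (f := id) hc
      exact this
    have ha₀ : Admissible s u₀ := admissible_subset ha (Finset.subset_insert b u₀)
    rw [Finset.prod_insert hbu, ih g₀ hg₀ ha₀, Finset.sum_mul_sum, ← Finset.sum_product']
    refine Finset.sum_nbij' (fun p => p.1 ∪ p.2)
      (fun v => (v.filter (· ⊆ b), v.filter (fun c => ¬ c ⊆ b))) ?_ ?_ ?_ ?_ ?_
    · -- forward membership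
      rintro ⟨Q, v₀⟩ hp
      rw [Finset.mem_product] at hp
      obtain ⟨hQ, hv₀'⟩ := hp
      obtain ⟨hv₀, href₀⟩ := Finset.mem_filter.1 hv₀'
      obtain ⟨⟨hQne, hQd, hQsup⟩, hQadm⟩ := mem_APfin.1 hQ
      obtain ⟨⟨hv₀ne, hv₀d, hv₀sup⟩, hv₀adm⟩ := mem_APfin.1 hv₀
      have hQb : ∀ c ∈ Q, c ⊆ b := fun c hc => by
        have := Finset.le_sup (f := id) hc
        rwa [hQsup] at this
      have hv₀g₀ : ∀ c ∈ v₀, c ⊆ g₀ := fun c hc => by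
        have := Finset.le_sup (f := id) hc
        rwa [hv₀sup] at this
      dsimp only
      rw [Finset.mem_filter, mem_APfin]
      refine ⟨⟨⟨?_, ?_, ?_⟩, ?_⟩, ?_⟩
      · intro c hc
        rcases Finset.mem_union.1 hc with h | h
        · exact hQne c h
        · exact hv₀ne c h
      · intro x hx y hy hxy
        rw [Finset.mem_coe, Finset.mem_union] at hx hy
        have cross : ∀ x' y' : Finset ℕ, x' ∈ Q → y' ∈ v₀ →
            Function.onFun Disjoint id x' y' := by
          intro x' y' hx' hy'
          simp only [Function.onFun, id_eq]
          exact hbg₀.mono (hQb x' hx') (hv₀g₀ y' hy')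
        rcases hx with hx | hx <;> rcases hy with hy | hy
        · exact hQd (Finset.mem_coe.2 hx) (Finset.mem_coe.2 hy) hxy
        · exact cross x y hx hy
        · exact (cross y x hy hx).symm
        · exact hv₀d (Finset.mem_coe.2 hx) (Finset.mem_coe.2 hy) hxy
      · rw [Finset.sup_union, hQsup, hv₀sup, hgsplit]
        rfl
      · -- admissibility of the union
        intro c hc c' hc' hcc' j hj hw
        rcases Finset.mem_union.1 hc with h | h <;> rcases Finset.mem_union.1 hc' with h' | h'
        · exact hQadm c h c' h' hcc' j hj hw
        · -- c ⊆ b, c' in v₀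
          obtain ⟨b', hb', hcb'⟩ := href₀ c' h'
          rintro ⟨hjn, i, hi, k, hk, h1, h2⟩
          have hjb : j ∈ b := hQb c h hj
          have hbne' : b ≠ b' := fun hh => hbu (hh ▸ hb')
          refine ha b (Finset.mem_insert_self b u₀) b' (Finset.mem_insert_of_mem hb')
            hbne' j hjb hw ⟨?_, i, hcb' hi, k, hcb' hk, h1, h2⟩
          intro hjb'
          exact (Finset.disjoint_left.1 (hbd b' hb')) hjb hjb'
        · -- c in v₀, c' ⊆ b
          obtain ⟨b', hb', hcb'⟩ := href₀ c h
          rintro ⟨hjn, i, hi, k, hk, h1, h2⟩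
          have hjb' : j ∈ b' := hcb' hj
          have hbne' : b' ≠ b := fun hh => hbu (hh ▸ hb')
          refine ha b' (Finset.mem_insert_of_mem hb') b (Finset.mem_insert_self b u₀)
            hbne' j hjb' hw ⟨?_, i, hQb c' h' hi, k, hQb c' h' hk, h1, h2⟩
          intro hjb
          exact (Finset.disjoint_left.1 (hbd b' hb')) hjb hjb'
        · exact hv₀adm c h c' h' hcc' j hj hw
      · -- refines insert b u₀
        intro c hc
        rcases Finset.mem_union.1 hc with h | h
        · exact ⟨b, Finset.mem_insert_self b u₀, hQb c h⟩
        · obtain ⟨b', hb', hcb'⟩ := href₀ c h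
          exact ⟨b', Finset.mem_insert_of_mem hb', hcb'⟩
    · -- backward membership
      intro v hv'
      obtain ⟨hv, href⟩ := Finset.mem_filter.1 hv'
      obtain ⟨⟨hvne, hvd, hvsup⟩, hvadm⟩ := mem_APfin.1 hv
      have hvg : ∀ c ∈ v, c ⊆ g := fun c hc => by
        have := Finset.le_sup (f := id) hc
        rwa [hvsup] at this
      have hkey : ∀ c ∈ v, ¬ c ⊆ b → ∃ b' ∈ u₀, c ⊆ b' := by
        intro c hc hcb
        obtain ⟨d, hd, hcd⟩ := href c hc
        rcases Finset.mem_insert.1 hd with rfl | hd'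
        · exact absurd hcd hcb
        · exact ⟨d, hd', hcd⟩
      rw [Finset.mem_product]
      constructor
      · rw [mem_APfin]
        refine ⟨⟨?_, ?_, ?_⟩, ?_⟩
        · exact fun c hc => hvne c (Finset.mem_filter.1 hc).1
        · exact hvd.subset (Finset.coe_subset.2 (Finset.filter_subset _ v))
        · apply le_antisymm
          · apply Finset.sup_le
            intro c hc
            exact (Finset.mem_filter.1 hc).2
          · intro x hxb
            have hxg : x ∈ g := by
              rw [hgsplit]
              exact Finset.mem_union_left _ hxb
            rw [← hvsup] at hxg
            obtain ⟨c, hc, hxc⟩ := Finset.mem_sup.1 hxg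
            have hcb : c ⊆ b := by
              by_contra hcb
              obtain ⟨b', hb', hcb'⟩ := hkey c hc hcb
              exact (Finset.disjoint_left.1 (hbd b' hb')) hxb (hcb' hxc)
            exact Finset.mem_sup.2 ⟨c, Finset.mem_filter.2 ⟨hc, hcb⟩, hxc⟩
        · exact admissible_subset hvadm (Finset.filter_subset _ v)
      · rw [Finset.mem_filter, mem_APfin]
        refine ⟨⟨⟨?_, ?_, ?_⟩, ?_⟩, ?_⟩
        · exact fun c hc => hvne c (Finset.mem_filter.1 hc).1
        · exact hvd.subset (Finset.coe_subset.2 (Finset.filter_subset _ v))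
        · apply le_antisymm
          · apply Finset.sup_le
            intro c hc
            obtain ⟨hc', hcb⟩ := Finset.mem_filter.1 hc
            obtain ⟨b', hb', hcb'⟩ := hkey c hc' hcb
            exact hcb'.trans (hsub₀ b' hb')
          · intro x hxg₀
            have hxg : x ∈ g := by
              rw [hgsplit]
              exact Finset.mem_union_right _ hxg₀
            rw [← hvsup] at hxg
            obtain ⟨c, hc, hxc⟩ := Finset.mem_sup.1 hxg
            have hcb : ¬ c ⊆ b := by
              intro hcb
              exact (Finset.disjoint_left.1 hbg₀) (hcb hxc) hxg₀
            exact Finset.mem_sup.2 ⟨c, Finset.mem_filter.2 ⟨hc, hcb⟩, hxc⟩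
        · exact admissible_subset hvadm (Finset.filter_subset _ v)
        · intro c hc
          obtain ⟨hc', hcb⟩ := Finset.mem_filter.1 hc
          exact hkey c hc' hcb
    · -- left inverse
      rintro ⟨Q, v₀⟩ hp
      rw [Finset.mem_product] at hp
      obtain ⟨hQ, hv₀'⟩ := hp
      obtain ⟨hv₀, href₀⟩ := Finset.mem_filter.1 hv₀'
      have hQb : ∀ c ∈ Q, c ⊆ b := fun c hc => block_subset (mem_APfin.1 hQ).1 hc
      have hv₀g₀ : ∀ c ∈ v₀, c ⊆ g₀ := fun c hc => block_subset (mem_APfin.1 hv₀).1 hc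
      have hv₀nb : ∀ c ∈ v₀, ¬ c ⊆ b := by
        intro c hc hcb
        obtain ⟨x, hx⟩ := (mem_APfin.1 hv₀).1.1 c hc
        exact (Finset.disjoint_left.1 hbg₀) (hcb hx) (hv₀g₀ c hc hx)
      dsimp only
      ext1
      · dsimp only
        ext c
        rw [Finset.mem_filter, Finset.mem_union]
        constructor
        · rintro ⟨h | h, hcb⟩
          · exact h
          · exact absurd hcb (hv₀nb c h)
        · intro h
          exact ⟨Or.inl h, hQb c h⟩
      · dsimp only
        ext c
        rw [Finset.mem_filter, Finset.mem_union]
        constructor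
        · rintro ⟨h | h, hcb⟩
          · exact absurd (hQb c h) hcb
          · exact h
        · intro h
          exact ⟨Or.inr h, hv₀nb c h⟩
    · -- right inverse
      intro v hv'
      dsimp only
      exact Finset.filter_union_filter_not_eq _ v
    · -- values
      rintro ⟨Q, v₀⟩ hp
      rw [Finset.mem_product] at hp
      obtain ⟨hQ, hv₀'⟩ := hp
      obtain ⟨hv₀, href₀⟩ := Finset.mem_filter.1 hv₀'
      have hQb : ∀ c ∈ Q, c ⊆ b := fun c hc => block_subset (mem_APfin.1 hQ).1 hc
      have hv₀g₀ : ∀ c ∈ v₀, c ⊆ g₀ := fun c hc => block_subset (mem_APfin.1 hv₀).1 hc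
      have hdQv : Disjoint Q v₀ := by
        rw [Finset.disjoint_left]
        intro c hcQ hcv₀
        obtain ⟨x, hx⟩ := (mem_APfin.1 hQ).1.1 c hcQ
        exact (Finset.disjoint_left.1 hbg₀) (hQb c hcQ hx) (hv₀g₀ c hcv₀ hx)
      dsimp only
      rw [Finset.prod_union hdQv]

lemma wordOf_range (s : Word) : wordOf s (Finset.range s.length) = s := by
  rw [wordOf, Finset.sort_range]
  apply List.ext_getElem
  · simp
  · intro i h1 h2
    have hi : i < s.length := h2
    simp only [List.getElem_map, List.getElem_range, letterAt]
    rw [List.getD_eq_getElem _ _ hi]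

open scoped Classical in
/-- Inversion formula for admissible cumulants:
`L(s) = Σ_{u ∈ AP(s)} m(u|1_s) M(u)`. -/
theorem cumulant_mobius_inversion (M L : Word → ℂ)
    (hM1 : M [] = 1) (hL : IsCumulants M L)
    (s : Word) (hs : s ≠ [])
    (m : Finset (Finset ℕ) → Finset (Finset ℕ) → ℂ)
    (hm : IsMobius s (Finset.range s.length) m) :
    L s = ∑ u ∈ APfin s (Finset.range s.length),
        m u {Finset.range s.length} * ∏ b ∈ u, M (wordOf s b) := by
  classical
  set g := Finset.range s.length with hgdef
  have hgne : g.Nonempty := by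
    rw [hgdef, Finset.nonempty_range_iff]
    exact fun h => hs (List.length_eq_zero_iff.1 h)
  have htop : {g} ∈ APfin s g := top_mem_APfin hgne
  have hMprod : ∀ u ∈ APfin s g, (∏ b ∈ u, M (wordOf s b))
      = ∑ v ∈ (APfin s g).filter (fun v => Refines v u), ∏ c ∈ v, L (wordOf s c) := by
    intro u hu
    obtain ⟨hpart, hadm⟩ := mem_APfin.1 hu
    rw [← glue L u g hpart hadm]
    refine Finset.prod_congr rfl fun b hb => ?_
    have hbne : wordOf s b ≠ [] := by
      intro h
      have hlw : (wordOf s b).length = b.card := length_wordOf s b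
      rw [h] at hlw
      obtain ⟨x, hx⟩ := hpart.1 b hb
      have : b.card ≠ 0 := Finset.card_ne_zero_of_mem hx
      simp at hlw
      exact this hlw.symm
    rw [hL _ hbne, length_wordOf, transport L]
  rw [Finset.sum_congr rfl (fun u hu => by rw [hMprod u hu])]
  have e1 : ∀ u ∈ APfin s g,
      (m u {g} * ∑ v ∈ (APfin s g).filter (fun v => Refines v u), ∏ c ∈ v, L (wordOf s c))
      = ∑ v ∈ APfin s g,
          (if Refines v u then m u {g} * ∏ c ∈ v, L (wordOf s c) else 0) := by
    intro u hu
    rw [Finset.mul_sum, ← Finset.sum_filter]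
  rw [Finset.sum_congr rfl e1, Finset.sum_comm]
  have e2 : ∀ v ∈ APfin s g,
      (∑ u ∈ APfin s g, if Refines v u then m u {g} * ∏ c ∈ v, L (wordOf s c) else 0)
      = (∑ u ∈ (APfin s g).filter (fun u => Refines v u ∧ Refines u {g}), m u {g})
          * ∏ c ∈ v, L (wordOf s c) := by
    intro v hv
    rw [Finset.sum_mul, Finset.sum_filter]
    refine Finset.sum_congr rfl fun u hu => ?_
    by_cases h : Refines v u
    · rw [if_pos h, if_pos ⟨h, refines_top hu⟩]
    · rw [if_neg h, if_neg (fun hh => h hh.1)]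
  rw [Finset.sum_congr rfl e2]
  have e3 : ∀ v ∈ APfin s g,
      ((∑ u ∈ (APfin s g).filter (fun u => Refines v u ∧ Refines u {g}), m u {g})
          * ∏ c ∈ v, L (wordOf s c))
      = (if v = {g} then 1 else 0) * ∏ c ∈ v, L (wordOf s c) := by
    intro v hv
    rw [mobius_delta hm hv htop (refines_top hv)]
  rw [Finset.sum_congr rfl e3]
  have e4 : ∀ v ∈ APfin s g,
      ((if v = {g} then (1 : ℂ) else 0) * ∏ c ∈ v, L (wordOf s c))
      = (if v = {g} then ∏ c ∈ v, L (wordOf s c) else 0) := by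
    intro v hv
    by_cases h : v = {g}
    · rw [if_pos h, if_pos h, one_mul]
    · rw [if_neg h, if_neg h, zero_mul]
  rw [Finset.sum_congr rfl e4, Finset.sum_ite_eq' _ ({g} : Finset (Finset ℕ))
    (fun v => ∏ c ∈ v, L (wordOf s c)), if_pos htop, Finset.prod_singleton, hgdef,
    wordOf_range]
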